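/- Suppose A ∈ M_d(Z) is a dilation matrix (all complex eigenvalues λ satisfy |λ| > 1) with |det A| > 1. Then the associated self-similar action (Z^d, Σ) is contracting: there is a finite set S ⊆ Z^d such that for every n ∈ Z^d there exists N with n|_v ∈ S whenever |v| ≥ N. -/

import Mathlib

/-- A self-similar action of a group `G` on words over an alphabet `X`:
`act` is the (faithful) action on finite words, `actX` the induced action on letters,
and `res` the restriction map, satisfying `g · (x w) = (g · x)(g|ₓ · w)`. -/
structure SelfSimilarAction (G : Type*) (X : Type*) [Group G] where
  act : G → List X → List X
  actX : G → X → X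
  res : G → X → G
  act_nil : ∀ g, act g [] = []
  act_cons : ∀ g x w, act g (x :: w) = actX g x :: act (res g x) w
  one_act : ∀ w, act 1 w = w
  mul_act : ∀ g h w, act (g * h) w = act g (act h w)
  faithful : ∀ g h : G, (∀ w, act g w = act h w) → g = h

namespace SelfSimilarAction

variable {G X : Type*} [Group G]

/-- The restriction of `g` to a word, `g|_v`. -/
def resW (S : SelfSimilarAction G X) : G → List X → G
  | g, [] => g
  | g, x :: v => S.resW (S.res g x) v

end SelfSimilarAction

open Matrix

section AuxLemmas

open Polynomial Filter

lemma aux_charpoly_eval {n : Type*} [Fintype n] [DecidableEq n] (M : Matrix n n ℂ) (z : ℂ) :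
    M.charpoly.eval z = (z • (1 : Matrix n n ℂ) - M).det := by
  rw [Matrix.charpoly, eval_det, Matrix.matPolyEquiv_charmatrix]
  simp [Matrix.scalar_apply, Matrix.smul_eq_diagonal_mul]

lemma aux_spectrum_root {n : Type*} [Fintype n] [DecidableEq n] (M : Matrix n n ℂ) {z : ℂ}
    (hz : z ∈ spectrum ℂ M) : M.charpoly.IsRoot z := by
  rw [spectrum.mem_iff] at hz
  have h2 : ¬ IsUnit (z • (1 : Matrix n n ℂ) - M) := by
    simpa [Algebra.algebraMap_eq_smul_one] using hz
  rw [Matrix.isUnit_iff_isUnit_det, isUnit_iff_ne_zero, not_not] at h2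
  rw [Polynomial.IsRoot, aux_charpoly_eval, h2]

lemma aux_coord_le_norm {d : ℕ} (x : EuclideanSpace ℂ (Fin d)) (i : Fin d) : ‖x i‖ ≤ ‖x‖ := by
  rw [EuclideanSpace.norm_eq]
  calc ‖x i‖ = Real.sqrt (‖x i‖^2) := (Real.sqrt_sq (norm_nonneg _)).symm
    _ ≤ _ := Real.sqrt_le_sqrt
      (Finset.single_le_sum (fun j _ => sq_nonneg ‖x j‖) (Finset.mem_univ i))

lemma aux_finite_quot {d : ℕ} (B : Matrix (Fin d) (Fin d) ℤ) (hdet : B.det ≠ 0) :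
    Finite ((Fin d → ℤ) ⧸ LinearMap.range B.mulVecLin) := by
  apply Module.finite_of_fg_torsion
  intro x
  obtain ⟨v, rfl⟩ := Submodule.Quotient.mk_surjective _ x
  refine ⟨⟨B.det, mem_nonZeroDivisors_of_ne_zero hdet⟩, ?_⟩
  have : B.det • v ∈ LinearMap.range B.mulVecLin := by
    refine ⟨(B.adjugate).mulVec v, ?_⟩
    simp only [Matrix.mulVecLin_apply, Matrix.mulVec_mulVec, Matrix.mul_adjugate]
    simp [Matrix.smul_mulVec, Matrix.one_mulVec]
  simpa [← Submodule.Quotient.mk_smul, Submodule.Quotient.mk_eq_zero] using this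

lemma aux_pow_lt {d : ℕ} (M : Matrix (Fin d) (Fin d) ℂ) (hdet : IsUnit M.det)
    (hsp : ∀ z ∈ spectrum ℂ M, 1 < ‖z‖) :
    ∃ k : ℕ, 1 ≤ k ∧ ‖(Matrix.toEuclideanCLM (𝕜 := ℂ) M⁻¹) ^ k‖ < 1 := by
  set u : (Matrix (Fin d) (Fin d) ℂ)ˣ := M.nonsingInvUnit hdet with hu
  have hCu : M⁻¹ = ↑u⁻¹ := (Matrix.coe_units_inv u ▸ rfl : M⁻¹ = ↑u⁻¹)
  have hC : ∀ μ ∈ spectrum ℂ M⁻¹, ‖μ‖₊ < 1 := by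
    intro μ hμ
    have hisu : IsUnit (M⁻¹) := hCu ▸ (u⁻¹).isUnit
    have hμ0 : μ ≠ 0 := by
      rintro rfl
      exact spectrum.zero_notMem ℂ hisu hμ
    have hinv : (μ⁻¹ : ℂ) ∈ spectrum ℂ M := by
      have h2 := (spectrum.inv_mem_iff (r := Units.mk0 μ hμ0) (a := u⁻¹)).mp (by rwa [hCu] at hμ)
      rw [inv_inv] at h2
      have huM : (↑u : Matrix (Fin d) (Fin d) ℂ) = M := rfl
      rw [huM] at h2
      simpa using h2
    have h1 := hsp _ hinv
    rw [norm_inv] at h1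
    have habs : ‖μ‖ < 1 := by
      have h0 : 0 < ‖μ‖ := by simpa using hμ0
      rw [lt_inv_comm₀ (by norm_num) h0] at h1
      simpa using h1
    simpa [← NNReal.coe_lt_one, nnnorm] using habs
  set L : EuclideanSpace ℂ (Fin d) →L[ℂ] EuclideanSpace ℂ (Fin d) :=
    Matrix.toEuclideanCLM (𝕜 := ℂ) M⁻¹ with hL
  have heq : spectrum ℂ L = spectrum ℂ M⁻¹ :=
    AlgEquiv.spectrum_eq (Matrix.toEuclideanCLM (𝕜 := ℂ)) _
  have hfin := Matrix.finite_spectrum (M⁻¹)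
  set F := hfin.toFinset with hF
  have hr1 : F.sup (fun z => ‖z‖₊) < 1 := by
    rw [Finset.sup_lt_iff (by norm_num : (⊥ : NNReal) < 1)]
    intro b hb
    exact hC b (hfin.mem_toFinset.mp hb)
  have hrad : spectralRadius ℂ L < 1 := by
    have hle : spectralRadius ℂ L ≤ ((F.sup fun z => ‖z‖₊ : NNReal) : ENNReal) := by
      rw [spectralRadius]
      refine iSup₂_le fun k hk => ?_
      rw [heq] at hk
      exact ENNReal.coe_le_coe.mpr (Finset.le_sup (hfin.mem_toFinset.mpr hk))
    exact lt_of_le_of_lt hle (by exact_mod_cast hr1)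
  have hG := spectrum.pow_nnnorm_pow_one_div_tendsto_nhds_spectralRadius L
  have hev := (hG.eventually_lt_const hrad).and (eventually_ge_atTop 1)
  obtain ⟨k, hklt, hk1⟩ := hev.exists
  refine ⟨k, hk1, ?_⟩
  have hnn : ‖L ^ k‖₊ < 1 := by
    by_contra hcon
    push_neg at hcon
    have : (1 : ENNReal) ≤ (‖L ^ k‖₊ : ENNReal) ^ (1 / (k : ℝ)) := by
      calc (1 : ENNReal) = 1 ^ (1 / (k : ℝ)) := (ENNReal.one_rpow _).symm
        _ ≤ _ := ENNReal.rpow_le_rpow (by exact_mod_cast hcon) (by positivity)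
    exact absurd hklt (not_lt.mpr this)
  exact_mod_cast hnn

lemma aux_L_inv {d : ℕ} (B : Matrix (Fin d) (Fin d) ℤ)
    (hdet : IsUnit (B.map (Int.cast : ℤ → ℂ)).det) (w : Fin d → ℤ) :
    Matrix.toEuclideanCLM (𝕜 := ℂ) (B.map (Int.cast : ℤ → ℂ))⁻¹
      ((WithLp.equiv 2 (Fin d → ℂ)).symm (fun i => ((B.mulVec w) i : ℂ)))
      = (WithLp.equiv 2 (Fin d → ℂ)).symm (fun i => (w i : ℂ)) := by
  have h1 : (fun i => ((B.mulVec w) i : ℂ))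
      = (B.map (Int.cast : ℤ → ℂ)).mulVec (fun i => (w i : ℂ)) := by
    funext i
    exact RingHom.map_mulVec (Int.castRingHom ℂ) B w i
  rw [h1, WithLp.equiv_symm_apply, Matrix.toEuclideanCLM_toLp, Matrix.mulVec_mulVec,
    Matrix.nonsing_inv_mul _ hdet, Matrix.one_mulVec]

end AuxLemmas

section adNorm
variable {E : Type*} [NormedAddCommGroup E] [NormedSpace ℂ E]

/-- An adapted norm: `∑ i < k, ‖L^i x‖ / ρ^i`. -/
noncomputable def adNorm (L : E →L[ℂ] E) (k : ℕ) (ρ : ℝ) (x : E) : ℝ :=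
  ∑ i ∈ Finset.range k, ‖(L ^ i) x‖ * ρ⁻¹ ^ i

lemma adNorm_nonneg (L : E →L[ℂ] E) (k : ℕ) {ρ : ℝ} (hρ : 0 < ρ) (x : E) :
    0 ≤ adNorm L k ρ x :=
  Finset.sum_nonneg fun i _ => mul_nonneg (norm_nonneg _) (pow_nonneg (by positivity) i)

lemma norm_le_adNorm (L : E →L[ℂ] E) {k : ℕ} (hk : 1 ≤ k) {ρ : ℝ} (hρ : 0 < ρ) (x : E) :
    ‖x‖ ≤ adNorm L k ρ x := by
  unfold adNorm
  have h0 : (0 : ℕ) ∈ Finset.range k := Finset.mem_range.mpr hk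
  have := Finset.single_le_sum (f := fun i => ‖(L ^ i) x‖ * ρ⁻¹ ^ i)
    (fun i _ => mul_nonneg (norm_nonneg _) (pow_nonneg (by positivity) i)) h0
  simpa using this

lemma adNorm_le (L : E →L[ℂ] E) (k : ℕ) {ρ : ℝ} (hρ : 0 < ρ) (x : E) :
    adNorm L k ρ x ≤ (∑ i ∈ Finset.range k, ‖L ^ i‖ * ρ⁻¹ ^ i) * ‖x‖ := by
  unfold adNorm
  rw [Finset.sum_mul]
  refine Finset.sum_le_sum fun i _ => ?_
  rw [mul_right_comm]
  exact mul_le_mul_of_nonneg_right ((L ^ i).le_opNorm x) (pow_nonneg (by positivity) i)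

lemma adNorm_add (L : E →L[ℂ] E) (k : ℕ) {ρ : ℝ} (hρ : 0 < ρ) (x y : E) :
    adNorm L k ρ (x + y) ≤ adNorm L k ρ x + adNorm L k ρ y := by
  unfold adNorm
  rw [← Finset.sum_add_distrib]
  refine Finset.sum_le_sum fun i _ => ?_
  rw [← add_mul]
  refine mul_le_mul_of_nonneg_right ?_ (pow_nonneg (by positivity) i)
  simpa using norm_add_le ((L ^ i) x) ((L ^ i) y)

lemma adNorm_neg (L : E →L[ℂ] E) (k : ℕ) (ρ : ℝ) (x : E) :
    adNorm L k ρ (-x) = adNorm L k ρ x := by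
  unfold adNorm
  congr 1
  funext i
  rw [map_neg, norm_neg]

lemma adNorm_apply_le (L : E →L[ℂ] E) {k : ℕ} (hk : 1 ≤ k) {ρ : ℝ} (hρ : 0 < ρ)
    (hρk : ‖L ^ k‖ ≤ ρ ^ k) (x : E) :
    adNorm L k ρ (L x) ≤ ρ * adNorm L k ρ x := by
  set f : ℕ → ℝ := fun i => ‖(L ^ i) x‖ * ρ⁻¹ ^ i with hf
  have hstep : adNorm L k ρ (L x) = ρ * ∑ i ∈ Finset.range k, f (i + 1) := by
    unfold adNorm
    rw [Finset.mul_sum]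
    refine Finset.sum_congr rfl fun i _ => ?_
    have h1 : (L ^ i) (L x) = (L ^ (i + 1)) x := by
      rw [pow_succ, ContinuousLinearMap.mul_apply]
    rw [h1, hf]
    simp only
    rw [pow_succ]
    field_simp
    rw [pow_succ (1 / ρ), one_div, mul_comm _ ρ⁻¹, ← mul_assoc, mul_assoc _ ρ ρ⁻¹,
      mul_inv_cancel₀ hρ.ne', mul_one]
  have hshift : ∑ i ∈ Finset.range k, f (i + 1) = adNorm L k ρ x + f k - f 0 := by
    have h2 := Finset.sum_range_succ' f k
    have h3 := Finset.sum_range_succ f k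
    have : adNorm L k ρ x = ∑ i ∈ Finset.range k, f i := rfl
    rw [this]
    linarith [h2, h3]
  have hf0 : f 0 = ‖x‖ := by simp [hf]
  have hfk : f k ≤ ‖x‖ := by
    rw [hf]
    simp only
    calc ‖(L ^ k) x‖ * ρ⁻¹ ^ k ≤ (ρ ^ k * ‖x‖) * ρ⁻¹ ^ k := by
          refine mul_le_mul_of_nonneg_right ?_ (pow_nonneg (by positivity) k)
          exact le_trans ((L ^ k).le_opNorm x) (mul_le_mul_of_nonneg_right hρk (norm_nonneg x))
      _ = ‖x‖ * (ρ * ρ⁻¹) ^ k := by rw [mul_pow]; ring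
      _ = ‖x‖ := by rw [mul_inv_cancel₀ hρ.ne', one_pow, mul_one]
  rw [hstep, hshift]
  have := adNorm_nonneg L k hρ x
  nlinarith [hρ]

end adNorm

/-- If `A` is an integer dilation matrix (all complex eigenvalues `λ` satisfy `|λ| > 1`)
with `|det A| > 1`, then the associated self-similar action `(ℤ^d, Σ)` is contracting:
there is a finite set `T ⊆ ℤ^d` such that for every `n ∈ ℤ^d` there exists `N` with
`n|_v ∈ T` whenever `|v| ≥ N`. -/
theorem dilation_contracting {d : ℕ} (A : Matrix (Fin d) (Fin d) ℤ)
    (hA : 1 < |A.det|)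
    (hdil : ∀ z : ℂ, (A.map (Int.cast : ℤ → ℂ)).charpoly.IsRoot z → 1 < ‖z‖)
    (Sig : Set (Fin d → ℤ)) (hSig0 : (0 : Fin d → ℤ) ∈ Sig)
    (c : (Fin d → ℤ) → (Fin d → ℤ))
    (hc_mem : ∀ m, c m ∈ Sig)
    (hc_coset : ∀ m, ∃ u : (Fin d → ℤ), Aᵀ.mulVec u = m - c m)
    (hc_unique : ∀ m s, s ∈ Sig → (∃ u : (Fin d → ℤ), Aᵀ.mulVec u = m - s) → s = c m)
    (S : SelfSimilarAction (Multiplicative (Fin d → ℤ)) Sig)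
    (hS : ∀ (n : Fin d → ℤ) (x : Sig),
        (S.actX (Multiplicative.ofAdd n) x : Fin d → ℤ) = c (n + (x : Fin d → ℤ)) ∧
        Aᵀ.mulVec (Multiplicative.toAdd (S.res (Multiplicative.ofAdd n) x))
          = n + (x : Fin d → ℤ) - c (n + (x : Fin d → ℤ))) :
    ∃ T : Set (Fin d → ℤ), T.Finite ∧
      ∀ n : Fin d → ℤ, ∃ N : ℕ, ∀ v : List Sig, N ≤ v.length →
        Multiplicative.toAdd (S.resW (Multiplicative.ofAdd n) v) ∈ T := by
  classical
  have hdetA : A.det ≠ 0 := by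
    intro h
    rw [h] at hA
    norm_num at hA
  set Bz := Aᵀ with hBz
  have hdetBz : Bz.det ≠ 0 := by rwa [hBz, Matrix.det_transpose]
  set Bc := Bz.map (Int.cast : ℤ → ℂ) with hBc
  have hdetBc : Bc.det = ((Bz.det : ℤ) : ℂ) := by
    rw [hBc]
    rw [show Bz.map (Int.cast : ℤ → ℂ) = (Int.castRingHom ℂ).mapMatrix Bz from rfl,
      ← RingHom.map_det]
    rfl
  have hdetBcU : IsUnit Bc.det := by
    rw [hdetBc, isUnit_iff_ne_zero]
    exact_mod_cast hdetBz
  -- Sig is finite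
  have hSigFin : Sig.Finite := by
    haveI := aux_finite_quot Bz hdetBz
    set P := LinearMap.range Bz.mulVecLin with hP
    have hinj : Function.Injective
        (fun s : Sig => Submodule.Quotient.mk (p := P) (s : Fin d → ℤ)) := by
      rintro ⟨s, hs⟩ ⟨t, ht⟩ h
      simp only at h
      rw [Submodule.Quotient.eq] at h
      obtain ⟨u, hu⟩ := h
      have h1 : t = c s := hc_unique s t ht ⟨u, by simpa [Matrix.mulVecLin_apply] using hu⟩
      have h2 : s = c s := hc_unique s s hs ⟨0, by simp⟩
      exact Subtype.ext (h2.trans h1.symm)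
    exact Set.finite_coe_iff.mp (Finite.of_injective _ hinj)
  -- spectrum of Bc lies outside the closed unit disc
  have hspec : ∀ z ∈ spectrum ℂ Bc, 1 < ‖z‖ := by
    intro z hz
    apply hdil
    have hroot := aux_spectrum_root Bc hz
    rw [Polynomial.IsRoot, aux_charpoly_eval] at hroot ⊢
    have htr : z • (1 : Matrix (Fin d) (Fin d) ℂ) - Bc
        = (z • 1 - A.map (Int.cast : ℤ → ℂ))ᵀ := by
      rw [Matrix.transpose_sub, Matrix.transpose_smul, Matrix.transpose_one, hBc, hBz,
        Matrix.transpose_map]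
    rw [htr, Matrix.det_transpose] at hroot
    exact hroot
  obtain ⟨k, hk1, hkn⟩ := aux_pow_lt Bc hdetBcU hspec
  set L : EuclideanSpace ℂ (Fin d) →L[ℂ] EuclideanSpace ℂ (Fin d) :=
    Matrix.toEuclideanCLM (𝕜 := ℂ) Bc⁻¹ with hLdef
  -- the contraction factor ρ
  set b := max ‖L ^ k‖ 2⁻¹ with hbdef
  have hb0 : 0 < b := lt_max_of_lt_right (by norm_num)
  have hb1 : b < 1 := max_lt hkn (by norm_num)
  set ρ := b ^ ((k : ℝ)⁻¹) with hρdef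
  have hρ0 : 0 < ρ := Real.rpow_pos_of_pos hb0 _
  have hρ1 : ρ < 1 := Real.rpow_lt_one hb0.le hb1 (by positivity)
  have hkne : (k : ℝ) ≠ 0 := Nat.cast_ne_zero.mpr (by omega)
  have hρk : ‖L ^ k‖ ≤ ρ ^ k := by
    have hh : ρ ^ k = b := by
      rw [hρdef, ← Real.rpow_natCast (b ^ ((k : ℝ)⁻¹)) k, ← Real.rpow_mul hb0.le,
        inv_mul_cancel₀ hkne, Real.rpow_one]
    rw [hh]
    exact le_max_left _ _
  -- the embedding of ℤ^d into Euclidean space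
  set φ : (Fin d → ℤ) → EuclideanSpace ℂ (Fin d) :=
    fun n => (WithLp.equiv 2 (Fin d → ℂ)).symm (fun i => (n i : ℂ)) with hφdef
  have hφadd : ∀ a b : Fin d → ℤ, φ (a + b) = φ a + φ b := by
    intro a b
    rw [hφdef]
    simp only
    rw [WithLp.equiv_symm_apply, ← WithLp.toLp_add]
    congr 1
    funext i
    simp only [Pi.add_apply, Int.cast_add]
  have hφsub : ∀ a b : Fin d → ℤ, φ (a - b) = φ a - φ b := by
    intro a b
    rw [hφdef]
    simp only
    rw [WithLp.equiv_symm_apply, ← WithLp.toLp_sub]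
    congr 1
    funext i
    simp only [Pi.sub_apply, Int.cast_sub]
  -- one-step formula
  have hstep : ∀ (g : Multiplicative (Fin d → ℤ)) (x : Sig),
      φ (Multiplicative.toAdd (S.res g x))
        = L (φ (Multiplicative.toAdd g) + φ x
            - φ (c (Multiplicative.toAdd g + (x : Fin d → ℤ)))) := by
    intro g x
    have h := (hS (Multiplicative.toAdd g) x).2
    rw [ofAdd_toAdd] at h
    have h2 : L (φ (Bz.mulVec (Multiplicative.toAdd (S.res g x))))
        = φ (Multiplicative.toAdd (S.res g x)) := by
      rw [hLdef, hBc, hφdef]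
      exact aux_L_inv Bz (hBc ▸ hdetBcU) (Multiplicative.toAdd (S.res g x))
    rw [← h2, h, hφsub, hφadd]
  -- constants
  set cN := ∑ i ∈ Finset.range k, ‖L ^ i‖ * ρ⁻¹ ^ i with hcN
  have hcN0 : 0 ≤ cN :=
    Finset.sum_nonneg fun i _ => mul_nonneg (norm_nonneg _) (pow_nonneg (by positivity) i)
  set Fs := hSigFin.toFinset with hFs
  set Rb := ∑ s ∈ Fs, ‖φ s‖ with hRb
  have hRbs : ∀ s ∈ Sig, ‖φ s‖ ≤ Rb := fun s hs =>
    Finset.single_le_sum (fun t _ => norm_nonneg _) (hSigFin.mem_toFinset.mpr hs)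
  have hRb0 : 0 ≤ Rb := Finset.sum_nonneg fun t _ => norm_nonneg _
  set D := 2 * (cN * Rb) with hD
  have hD0 : 0 ≤ D := by positivity
  set E0 := ρ * D / (1 - ρ) with hE0
  have h1ρ : 0 < 1 - ρ := by linarith
  have hE00 : 0 ≤ E0 := by positivity
  have hE0key : ρ * D = (1 - ρ) * E0 := by
    rw [hE0]
    field_simp
  -- one-step bound for the adapted norm
  have hstepN : ∀ (g : Multiplicative (Fin d → ℤ)) (x : Sig),
      adNorm L k ρ (φ (Multiplicative.toAdd (S.res g x)))
        ≤ ρ * adNorm L k ρ (φ (Multiplicative.toAdd g)) + ρ * D := by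
    intro g x
    rw [hstep g x]
    set a1 := φ (Multiplicative.toAdd g) with ha1
    set a2 := φ (x : Fin d → ℤ) with ha2
    set a3 := φ (c (Multiplicative.toAdd g + (x : Fin d → ℤ))) with ha3
    have h1 := adNorm_apply_le L hk1 hρ0 hρk (a1 + a2 - a3)
    have hsum : adNorm L k ρ (a1 + a2 - a3) ≤ adNorm L k ρ a1 + D := by
      have t0 : a1 + a2 - a3 = (a1 + a2) + (-a3) := by abel
      have t1 := adNorm_add L k hρ0 (a1 + a2) (-a3)
      have t2 := adNorm_add L k hρ0 a1 a2
      rw [adNorm_neg] at t1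
      have hx2 : adNorm L k ρ a2 ≤ cN * Rb :=
        le_trans (adNorm_le L k hρ0 a2) (mul_le_mul_of_nonneg_left (hRbs _ x.2) hcN0)
      have hx3 : adNorm L k ρ a3 ≤ cN * Rb :=
        le_trans (adNorm_le L k hρ0 a3) (mul_le_mul_of_nonneg_left (hRbs _ (hc_mem _)) hcN0)
      rw [t0]
      rw [hD]
      linarith
    calc adNorm L k ρ (L (a1 + a2 - a3)) ≤ ρ * adNorm L k ρ (a1 + a2 - a3) := h1
      _ ≤ ρ * (adNorm L k ρ a1 + D) := mul_le_mul_of_nonneg_left hsum hρ0.le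
      _ = ρ * adNorm L k ρ a1 + ρ * D := by ring
  -- the main induction along words
  have hmain : ∀ (v : List Sig) (g : Multiplicative (Fin d → ℤ)),
      adNorm L k ρ (φ (Multiplicative.toAdd (S.resW g v)))
        ≤ ρ ^ v.length * adNorm L k ρ (φ (Multiplicative.toAdd g))
          + (1 - ρ ^ v.length) * E0 := by
    intro v
    induction v with
    | nil =>
      intro g
      simp [SelfSimilarAction.resW]
    | cons x v ih =>
      intro g
      have h1 : S.resW g (x :: v) = S.resW (S.res g x) v := rfl
      rw [h1]
      have h2 := ih (S.res g x)
      have h3 := hstepN g x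
      have hpn : (0 : ℝ) ≤ ρ ^ v.length := pow_nonneg hρ0.le _
      have hp1 : ρ ^ v.length ≤ 1 := pow_le_one₀ hρ0.le hρ1.le
      have hNg0 : 0 ≤ adNorm L k ρ (φ (Multiplicative.toAdd g)) := adNorm_nonneg L k hρ0 _
      have key : ρ ^ v.length * (ρ * D) = ρ ^ v.length * ((1 - ρ) * E0) := by rw [hE0key]
      calc adNorm L k ρ (φ (Multiplicative.toAdd (S.resW (S.res g x) v)))
          ≤ ρ ^ v.length * adNorm L k ρ (φ (Multiplicative.toAdd (S.res g x)))
            + (1 - ρ ^ v.length) * E0 := h2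
        _ ≤ ρ ^ v.length * (ρ * adNorm L k ρ (φ (Multiplicative.toAdd g)) + ρ * D)
            + (1 - ρ ^ v.length) * E0 := by
            exact add_le_add_left (mul_le_mul_of_nonneg_left h3 hpn) _
        _ ≤ ρ ^ (x :: v).length * adNorm L k ρ (φ (Multiplicative.toAdd g))
            + (1 - ρ ^ (x :: v).length) * E0 := by
            simp only [List.length_cons, pow_succ]
            nlinarith [key]
  -- the finite set T
  refine ⟨{w : Fin d → ℤ | ‖φ w‖ ≤ E0 + 1}, ?_, ?_⟩
  · set M0 : ℤ := ⌈E0 + 1⌉ with hM0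
    apply Set.Finite.subset (Set.finite_Icc (fun _ : Fin d => -M0) (fun _ : Fin d => M0))
    intro w hw
    simp only [Set.mem_setOf_eq] at hw
    have hcoord : ∀ i, |(w i : ℝ)| ≤ (M0 : ℝ) := by
      intro i
      have h1 : ‖(φ w) i‖ ≤ ‖φ w‖ := aux_coord_le_norm (φ w) i
      have h2 : (φ w) i = ((w i : ℤ) : ℂ) := rfl
      rw [h2] at h1
      have h3 : ‖((w i : ℤ) : ℂ)‖ = |(w i : ℝ)| := by
        rw [show ((w i : ℤ) : ℂ) = ((w i : ℝ) : ℂ) by push_cast; rfl, Complex.norm_real,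
          Real.norm_eq_abs]
      rw [h3] at h1
      calc |(w i : ℝ)| ≤ E0 + 1 := le_trans h1 hw
        _ ≤ (M0 : ℝ) := Int.le_ceil _
    rw [Set.mem_Icc]
    constructor
    · intro i
      have := hcoord i
      have h4 : -(M0 : ℝ) ≤ (w i : ℝ) := by
        rw [abs_le] at this
        exact this.1
      exact_mod_cast h4
    · intro i
      have := hcoord i
      have h4 : (w i : ℝ) ≤ (M0 : ℝ) := by
        rw [abs_le] at this
        exact this.2
      exact_mod_cast h4
  · intro n
    have h0 : Filter.Tendsto (fun j : ℕ => ρ ^ j * adNorm L k ρ (φ n)) Filter.atTop (nhds 0) := by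
      simpa using (tendsto_pow_atTop_nhds_zero_of_lt_one hρ0.le hρ1).mul_const
        (adNorm L k ρ (φ n))
    obtain ⟨N, hN⟩ := Filter.eventually_atTop.mp
      (h0.eventually_lt_const (by norm_num : (0 : ℝ) < 1))
    refine ⟨N, fun v hv => ?_⟩
    have h2 := hmain v (Multiplicative.ofAdd n)
    rw [toAdd_ofAdd] at h2
    have h3 : ρ ^ v.length * adNorm L k ρ (φ n) < 1 := hN _ hv
    have hpn : (0 : ℝ) ≤ ρ ^ v.length := pow_nonneg hρ0.le _
    have h4 : (1 - ρ ^ v.length) * E0 ≤ E0 := by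
      have h6 : 0 ≤ ρ ^ v.length * E0 := mul_nonneg hpn hE00
      have h7 : (1 - ρ ^ v.length) * E0 = E0 - ρ ^ v.length * E0 := by ring
      rw [h7]
      linarith
    have h5 : ‖φ (Multiplicative.toAdd (S.resW (Multiplicative.ofAdd n) v))‖
        ≤ adNorm L k ρ (φ (Multiplicative.toAdd (S.resW (Multiplicative.ofAdd n) v))) :=
      norm_le_adNorm L hk1 hρ0 _
    simp only [Set.mem_setOf_eq]
    linarith
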